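/- arXiv:1102.3998 — 3 statements merged into one kernel-verified Lean document; each statement's English description precedes it below -/
import Mathlib

section
/- Let F : ℂ → ℂ be smooth (as a function of two real variables) such that F and all its partial derivatives grow at most polynomially, i.e. for every multi-index α there exist C > 0 and N ∈ ℕ with |∂^α F(z)| ≤ C (1 + |z|)^N for all z ∈ ℂ. If (u_ε)_{ε∈(0,1]} is a moderate net of elements of 𝓑_ap, then (F ∘ u_ε)_{ε∈(0,1]} is again a moderate net of elements of 𝓑_ap; moreover, replacing (u_ε) by another moderate net (v_ε) with (u_ε − v_ε) negligible makes (F ∘ u_ε − F ∘ v_ε) negligible. -/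
open Filter MeasureTheory Topology

noncomputable section

/-- A function `f : ℝ → ℂ` is almost periodic in the sense of Bochner: it is continuous
and from every sequence of real translates one can extract a subsequence along which
the translates converge uniformly on `ℝ`. -/
def AlmostPeriodic (f : ℝ → ℂ) : Prop :=
  Continuous f ∧ ∀ h : ℕ → ℝ, ∃ φ : ℕ → ℕ, StrictMono φ ∧ ∃ g : ℝ → ℂ,
    TendstoUniformly (fun k x => f (x + h (φ k))) g atTop

/-- `f ∈ 𝓑_ap` : `f` is smooth and every derivative of `f` is almost periodic. -/
def BAp (f : ℝ → ℂ) : Prop :=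
  ContDiff ℝ (⊤ : ℕ∞) f ∧ ∀ j : ℕ, AlmostPeriodic (iteratedDeriv j f)

/-- The seminorm `|f|_{k,∞} = Σ_{j ≤ k} sup_{x ∈ ℝ} ‖f^{(j)}(x)‖`. -/
def apSeminorm (k : ℕ) (f : ℝ → ℂ) : ℝ :=
  ∑ j ∈ Finset.range (k + 1), ⨆ x : ℝ, ‖iteratedDeriv j f x‖

/-- A net `(u_ε)_{ε ∈ (0,1]}` is moderate. -/
def Moderate (u : ℝ → ℝ → ℂ) : Prop :=
  ∀ k : ℕ, ∃ m : ℕ, ∃ C > 0, ∃ ε₀ ∈ Set.Ioc (0:ℝ) 1,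
    ∀ ε ∈ Set.Ioc (0:ℝ) 1, ε ≤ ε₀ → apSeminorm k (u ε) ≤ C / ε ^ m

/-- A net `(u_ε)_{ε ∈ (0,1]}` is negligible. -/
def Negligible (u : ℝ → ℝ → ℂ) : Prop :=
  ∀ k m : ℕ, ∃ C > 0, ∃ ε₀ ∈ Set.Ioc (0:ℝ) 1,
    ∀ ε ∈ Set.Ioc (0:ℝ) 1, ε ≤ ε₀ → apSeminorm k (u ε) ≤ C * ε ^ m

/-! ### Auxiliary lemmas on almost periodic functions -/

lemma AlmostPeriodic.bounded {f : ℝ → ℂ} (hf : AlmostPeriodic f) :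
    ∃ M, 0 ≤ M ∧ ∀ x, ‖f x‖ ≤ M := by
  by_contra hc
  push_neg at hc
  have hx : ∀ n : ℕ, ∃ x : ℝ, (n : ℝ) < ‖f x‖ := fun n => hc n (Nat.cast_nonneg n)
  choose h hh using hx
  obtain ⟨φ, hφ, g, hg⟩ := hf.2 h
  have ht : Tendsto (fun k => ‖f (0 + h (φ k))‖) atTop (𝓝 ‖g 0‖) := (hg.tendsto_at 0).norm
  have hb : ∀ᶠ k in atTop, ‖f (0 + h (φ k))‖ < ‖g 0‖ + 1 :=
    ht.eventually_lt_const (lt_add_one _)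
  obtain ⟨k₀, hk₀⟩ := exists_nat_gt (‖g 0‖ + 1)
  obtain ⟨k, hk1, hk2⟩ := (hb.and (eventually_ge_atTop k₀)).exists
  have h1 : (φ k : ℝ) < ‖f (h (φ k))‖ := hh (φ k)
  have h2 : (k₀ : ℝ) ≤ (φ k : ℝ) := by exact_mod_cast le_trans hk2 (hφ.le_apply)
  have : ‖f (h (φ k))‖ < ‖g 0‖ + 1 := by simpa using hk1
  linarith

lemma tendstoUniformly_subseq {F : ℕ → ℝ → ℂ} {g : ℝ → ℂ} (hF : TendstoUniformly F g atTop)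
    {φ : ℕ → ℕ} (hφ : Tendsto φ atTop atTop) :
    TendstoUniformly (fun k => F (φ k)) g atTop :=
  fun u hu => hφ.eventually (hF u hu)

lemma multi_extract : ∀ (n : ℕ) (w : Fin n → ℝ → ℂ), (∀ i, AlmostPeriodic (w i)) → ∀ h : ℕ → ℝ,
    ∃ φ : ℕ → ℕ, StrictMono φ ∧
      ∀ i, ∃ g, TendstoUniformly (fun k x => w i (x + h (φ k))) g atTop := by
  intro n
  induction n with
  | zero => exact fun w hw h => ⟨id, strictMono_id, fun i => i.elim0⟩
  | succ n ih =>
    intro w hw h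
    obtain ⟨φ₁, hφ₁, g₀, hg₀⟩ := (hw 0).2 h
    obtain ⟨φ₂, hφ₂, hconv⟩ := ih (fun i => w i.succ) (fun i => hw i.succ) (h ∘ φ₁)
    refine ⟨φ₁ ∘ φ₂, hφ₁.comp hφ₂, fun i => ?_⟩
    refine Fin.cases ?_ ?_ i
    · exact ⟨g₀, tendstoUniformly_subseq hg₀ hφ₂.tendsto_atTop⟩
    · intro j
      exact hconv j

lemma almostPeriodic_comp {n : ℕ} (Ψ : (Fin n → ℂ) → ℂ) (hΨ : Continuous Ψ)
    (w : Fin n → ℝ → ℂ) (hw : ∀ i, AlmostPeriodic (w i)) :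
    AlmostPeriodic (fun x => Ψ (fun i => w i x)) := by
  choose M hM0 hM using fun i => (hw i).bounded
  set R : ℝ := ∑ i, M i with hR
  have hR0 : 0 ≤ R := Finset.sum_nonneg fun i _ => hM0 i
  have hMR : ∀ i x, ‖w i x‖ ≤ R := fun i x =>
    (hM i x).trans (Finset.single_le_sum (fun j _ => hM0 j) (Finset.mem_univ i))
  refine ⟨hΨ.comp (continuous_pi fun i => (hw i).1), fun h => ?_⟩
  obtain ⟨φ, hφ, hconv⟩ := multi_extract n w hw h
  choose g hg using hconv
  refine ⟨φ, hφ, fun x => Ψ (fun i => g i x), ?_⟩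
  set K := Metric.closedBall (0 : Fin n → ℂ) R with hK
  have hKc : IsCompact K := isCompact_closedBall _ _
  have hΨu := hKc.uniformContinuousOn_of_continuous hΨ.continuousOn
  rw [Metric.tendstoUniformly_iff]
  intro ε hε
  obtain ⟨δ, hδ, hδ'⟩ := Metric.uniformContinuousOn_iff.1 hΨu ε hε
  have hmemW : ∀ k x, (fun i => w i (x + h (φ k))) ∈ K := by
    intro k x
    rw [hK, mem_closedBall_zero_iff]
    exact (pi_norm_le_iff_of_nonneg hR0).2 fun i => hMR i _
  have hmemG : ∀ x, (fun i => g i x) ∈ K := by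
    intro x
    rw [hK, mem_closedBall_zero_iff]
    refine (pi_norm_le_iff_of_nonneg hR0).2 fun i => ?_
    exact le_of_tendsto ((hg i).tendsto_at x).norm (Eventually.of_forall fun k => hMR i _)
  have hev : ∀ᶠ k in atTop, ∀ i : Fin n, ∀ x, dist (g i x) (w i (x + h (φ k))) < δ := by
    rw [eventually_all]
    intro i
    exact Metric.tendstoUniformly_iff.1 (hg i) δ hδ
  filter_upwards [hev] with k hk x
  exact hδ' _ (hmemG x) _ (hmemW k x) ((dist_pi_lt_iff hδ).2 fun i => hk i x)

/-! ### The universal Faà di Bruno expression -/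

/-- Universal expression for the iterated derivatives of a composition. -/
def FaaPsi (F : ℂ → ℂ) : (j : ℕ) → (Fin (j + 1) → ℂ) → ℂ
  | 0 => fun z => F (z 0)
  | j + 1 => fun z => fderiv ℝ (FaaPsi F j) (fun i => z i.castSucc) (fun i => z i.succ)

lemma faaPsi_contDiff (F : ℂ → ℂ) (hF : ContDiff ℝ (⊤ : ℕ∞) F) :
    ∀ j, ContDiff ℝ (⊤ : ℕ∞) (FaaPsi F j) := by
  intro j
  induction j with
  | zero =>
    exact hF.comp (ContinuousLinearMap.proj (R := ℝ) (φ := fun _ : Fin 1 => ℂ) 0).contDiff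
  | succ j ih =>
    have hfd : ContDiff ℝ (⊤ : ℕ∞) (fderiv ℝ (FaaPsi F j)) := by
      refine ih.fderiv_right ?_
      exact le_of_eq (by norm_cast)
    have hA : ContDiff ℝ (⊤ : ℕ∞)
        fun z : Fin (j + 2) → ℂ => (fun i : Fin (j + 1) => z i.castSucc) :=
      contDiff_pi.2 fun i =>
        (ContinuousLinearMap.proj (R := ℝ) (φ := fun _ : Fin (j + 2) => ℂ) i.castSucc).contDiff
    have hB : ContDiff ℝ (⊤ : ℕ∞)
        fun z : Fin (j + 2) → ℂ => (fun i : Fin (j + 1) => z i.succ) :=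
      contDiff_pi.2 fun i =>
        (ContinuousLinearMap.proj (R := ℝ) (φ := fun _ : Fin (j + 2) => ℂ) i.succ).contDiff
    exact (hfd.comp hA).clm_apply hB

lemma contDiff_iteratedDeriv {f : ℝ → ℂ} (hf : ContDiff ℝ (⊤ : ℕ∞) f) (j : ℕ) :
    ContDiff ℝ (⊤ : ℕ∞) (iteratedDeriv j f) := by
  rw [iteratedDeriv_eq_iterate]
  exact ContDiff.iterate_deriv j hf

lemma faaPsi_spec (F : ℂ → ℂ) (hF : ContDiff ℝ (⊤ : ℕ∞) F) {u : ℝ → ℂ}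
    (hu : ContDiff ℝ (⊤ : ℕ∞) u) :
    ∀ j x, iteratedDeriv j (fun x => F (u x)) x
      = FaaPsi F j (fun i => iteratedDeriv (i : ℕ) u x) := by
  intro j
  induction j with
  | zero => intro x; simp [FaaPsi, iteratedDeriv_zero]
  | succ j ih =>
    intro x
    have hU : HasDerivAt (fun y => (fun i : Fin (j + 1) => iteratedDeriv (i : ℕ) u y))
        (fun i : Fin (j + 1) => iteratedDeriv ((i : ℕ) + 1) u x) x := by
      rw [hasDerivAt_pi]
      intro i
      have hdi : DifferentiableAt ℝ (iteratedDeriv (i : ℕ) u) x :=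
        ((contDiff_iteratedDeriv hu _).differentiable (by simp)).differentiableAt
      have := hdi.hasDerivAt
      rwa [show deriv (iteratedDeriv (i : ℕ) u) x = iteratedDeriv ((i : ℕ) + 1) u x by
        rw [iteratedDeriv_succ]] at this
    have hΨd : HasFDerivAt (FaaPsi F j)
        (fderiv ℝ (FaaPsi F j) (fun i : Fin (j + 1) => iteratedDeriv (i : ℕ) u x)) _ :=
      (((faaPsi_contDiff F hF j).differentiable (by simp)) _).hasFDerivAt
    have hcomp := hΨd.comp_hasDerivAt x hU
    rw [iteratedDeriv_succ]
    have heq : (iteratedDeriv j fun x => F (u x))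
        = (FaaPsi F j ∘ fun y => (fun i : Fin (j + 1) => iteratedDeriv (i : ℕ) u y)) := funext ih
    rw [heq, hcomp.deriv]
    show _ = FaaPsi F (j + 1) (fun i : Fin (j + 2) => iteratedDeriv (i : ℕ) u x)
    rw [FaaPsi]
    simp [Fin.coe_castSucc, Fin.val_succ]

/-! ### Seminorm lemmas -/

lemma norm_le_apSeminorm {f : ℝ → ℂ} (hf : BAp f) {j k : ℕ} (hjk : j ≤ k) (x : ℝ) :
    ‖iteratedDeriv j f x‖ ≤ apSeminorm k f := by
  obtain ⟨M, _, hM⟩ := (hf.2 j).bounded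
  have hbdd : BddAbove (Set.range fun x => ‖iteratedDeriv j f x‖) :=
    ⟨M, by rintro _ ⟨y, rfl⟩; exact hM y⟩
  refine (le_ciSup hbdd x).trans ?_
  exact Finset.single_le_sum (f := fun i => ⨆ x : ℝ, ‖iteratedDeriv i f x‖)
    (fun i _ => Real.iSup_nonneg fun x => norm_nonneg _)
    (Finset.mem_range.2 (Nat.lt_succ_of_le hjk))

lemma apSeminorm_le_of_pointwise {f : ℝ → ℂ} {k : ℕ} {B : ℝ} (hB : 0 ≤ B)
    (h : ∀ j ≤ k, ∀ x, ‖iteratedDeriv j f x‖ ≤ B) : apSeminorm k f ≤ (k + 1) * B := by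
  have : apSeminorm k f ≤ ∑ _j ∈ Finset.range (k + 1), B := by
    refine Finset.sum_le_sum fun j hj => ?_
    exact Real.iSup_le (h j (Nat.lt_succ_iff.1 (Finset.mem_range.1 hj))) hB
  simpa [Finset.sum_const, Finset.card_range, nsmul_eq_mul] using this

/-- pointwise moderate bound at order `j` -/
def ModPt (w : ℝ → ℝ → ℂ) (j : ℕ) : Prop :=
  ∃ m : ℕ, ∃ C > 0, ∃ ε₀ ∈ Set.Ioc (0:ℝ) 1,
    ∀ ε ∈ Set.Ioc (0:ℝ) 1, ε ≤ ε₀ → ∀ x, ‖iteratedDeriv j (w ε) x‖ ≤ C / ε ^ m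

/-- pointwise negligible bound at order `j` -/
def NegliPt (w : ℝ → ℝ → ℂ) (j : ℕ) : Prop :=
  ∀ m : ℕ, ∃ C > 0, ∃ ε₀ ∈ Set.Ioc (0:ℝ) 1,
    ∀ ε ∈ Set.Ioc (0:ℝ) 1, ε ≤ ε₀ → ∀ x, ‖iteratedDeriv j (w ε) x‖ ≤ C * ε ^ m

lemma div_pow_mono {C C' : ℝ} (hC : 0 ≤ C) (hCC : C ≤ C') {ε : ℝ}
    (hε : ε ∈ Set.Ioc (0:ℝ) 1) {m m' : ℕ} (hm : m ≤ m') : C / ε ^ m ≤ C' / ε ^ m' := by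
  have h1 : ε ^ m' ≤ ε ^ m := pow_le_pow_of_le_one hε.1.le hε.2 hm
  have h2 : (0:ℝ) < ε ^ m' := pow_pos hε.1 _
  exact div_le_div₀ (hC.trans hCC) hCC h2 h1

lemma comp_modPt (F : ℂ → ℂ) (hF : ContDiff ℝ (⊤ : ℕ∞) F)
    (hgrowth : ∀ n : ℕ, ∃ C > (0:ℝ), ∃ N : ℕ, ∀ z : ℂ,
      ‖iteratedFDeriv ℝ n F z‖ ≤ C * (1 + ‖z‖) ^ N)
    (u : ℝ → ℝ → ℂ) (hu_ap : ∀ ε ∈ Set.Ioc (0:ℝ) 1, BAp (u ε)) (hu : Moderate u) (j : ℕ) :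
    ModPt (fun ε x => F (u ε x)) j := by
  choose Cg hCg Ng hNg using hgrowth
  set CF : ℝ := ∑ n ∈ Finset.range (j + 1), Cg n with hCF
  set NF : ℕ := ∑ n ∈ Finset.range (j + 1), Ng n with hNF
  have hCF0 : 0 < CF := Finset.sum_pos (fun n _ => hCg n) ⟨0, Finset.mem_range.2 (Nat.succ_pos _)⟩
  have hFg : ∀ i ≤ j, ∀ z : ℂ, ‖iteratedFDeriv ℝ i F z‖ ≤ CF * (1 + ‖z‖) ^ NF := by
    intro i hi z
    refine (hNg i z).trans ?_
    have h1z : (1:ℝ) ≤ 1 + ‖z‖ := by linarith [norm_nonneg z]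
    have hCgi : Cg i ≤ CF :=
      Finset.single_le_sum (fun n _ => (hCg n).le) (Finset.mem_range.2 (Nat.lt_succ_of_le hi))
    have hNgi : Ng i ≤ NF :=
      Finset.single_le_sum (f := Ng) (fun n _ => Nat.zero_le _)
        (Finset.mem_range.2 (Nat.lt_succ_of_le hi))
    have := pow_le_pow_right₀ h1z hNgi
    nlinarith [pow_nonneg (le_trans zero_le_one h1z) (Ng i)]
  obtain ⟨m, Cu, hCu, ε₀, hε₀, hmod⟩ := hu j
  refine ⟨m * (NF + j), Nat.factorial j * CF * (1 + Cu) ^ (NF + j), by positivity, ε₀, hε₀, ?_⟩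
  intro ε hε hεε₀ x
  have hBap := hu_ap ε hε
  set R : ℝ := Cu / ε ^ m with hR
  have hεpow : (0:ℝ) < ε ^ m := pow_pos hε.1 m
  have hR0 : 0 ≤ R := le_of_lt (div_pos hCu hεpow)
  have hder : ∀ i ≤ j, ‖iteratedDeriv i (u ε) x‖ ≤ R := fun i hi =>
    (norm_le_apSeminorm hBap hi x).trans (hmod ε hε hεε₀)
  have hu0 : ‖u ε x‖ ≤ R := by
    have := hder 0 (Nat.zero_le _)
    rwa [iteratedDeriv_zero] at this
  have key : ‖iteratedFDeriv ℝ j (F ∘ u ε) x‖ ≤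
      Nat.factorial j * (CF * (1 + R) ^ NF) * (1 + R) ^ j := by
    refine norm_iteratedFDeriv_comp_le (N := ((⊤ : ℕ∞) : WithTop ℕ∞)) hF hBap.1
      (by exact_mod_cast le_top) x ?_ ?_
    · intro i hi
      refine (hFg i hi _).trans ?_
      have : (1 + ‖u ε x‖) ^ NF ≤ (1 + R) ^ NF := by
        gcongr
      nlinarith
    · intro i hi1 hij
      have h1 : ‖iteratedFDeriv ℝ i (u ε) x‖ = ‖iteratedDeriv i (u ε) x‖ :=
        norm_iteratedFDeriv_eq_norm_iteratedDeriv
      rw [h1]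
      refine (hder i hij).trans ?_
      calc R ≤ 1 + R := by linarith
        _ ≤ (1 + R) ^ i := le_self_pow₀ (by linarith) (by omega)
  have hnorm : ‖iteratedDeriv j (fun x => F (u ε x)) x‖ = ‖iteratedFDeriv ℝ j (F ∘ u ε) x‖ :=
    (norm_iteratedFDeriv_eq_norm_iteratedDeriv).symm
  rw [hnorm]
  refine key.trans ?_
  have hRle : 1 + R ≤ (1 + Cu) / ε ^ m := by
    have hεm1 : ε ^ m ≤ 1 := pow_le_one₀ hε.1.le hε.2
    rw [hR, add_div]
    gcongr
    rw [le_div_iff₀ hεpow, one_mul]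
    exact hεm1
  have hpow : (1 + R) ^ (NF + j) ≤ ((1 + Cu) / ε ^ m) ^ (NF + j) := by
    gcongr
  calc Nat.factorial j * (CF * (1 + R) ^ NF) * (1 + R) ^ j
      = Nat.factorial j * CF * (1 + R) ^ (NF + j) := by rw [pow_add]; ring
    _ ≤ Nat.factorial j * CF * ((1 + Cu) / ε ^ m) ^ (NF + j) := by
        have : (0:ℝ) ≤ Nat.factorial j * CF := by positivity
        nlinarith
    _ = Nat.factorial j * CF * (1 + Cu) ^ (NF + j) / ε ^ (m * (NF + j)) := by
        rw [div_pow, pow_mul]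
        ring

lemma modPt_combine {w : ℝ → ℝ → ℂ} (hw : ∀ j, ModPt w j) (k : ℕ) :
    ∃ m : ℕ, ∃ C > 0, ∃ ε₀ ∈ Set.Ioc (0:ℝ) 1, ∀ ε ∈ Set.Ioc (0:ℝ) 1, ε ≤ ε₀ →
      ∀ j ≤ k, ∀ x, ‖iteratedDeriv j (w ε) x‖ ≤ C / ε ^ m := by
  induction k with
  | zero =>
    obtain ⟨m, C, hC, ε₀, hε₀, H⟩ := hw 0
    exact ⟨m, C, hC, ε₀, hε₀, fun ε hε hεε j hj x => by
      rw [Nat.le_zero.1 hj]; exact H ε hε hεε x⟩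
  | succ k ih =>
    obtain ⟨m₁, C₁, hC₁, ε₁, hε₁, H₁⟩ := ih
    obtain ⟨m₂, C₂, hC₂, ε₂, hε₂, H₂⟩ := hw (k + 1)
    refine ⟨max m₁ m₂, C₁ + C₂, by positivity, min ε₁ ε₂,
      ⟨lt_min hε₁.1 hε₂.1, (min_le_left _ _).trans hε₁.2⟩, ?_⟩
    intro ε hε hεε j hj x
    rcases Nat.lt_succ_iff_lt_or_eq.1 (Nat.lt_succ_of_le hj) with hj' | hj'
    · exact (H₁ ε hε (hεε.trans (min_le_left _ _)) j (Nat.lt_succ_iff.1 hj') x).trans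
        (div_pow_mono hC₁.le (by linarith) hε (le_max_left _ _))
    · rw [hj']
      exact (H₂ ε hε (hεε.trans (min_le_right _ _)) x).trans
        (div_pow_mono hC₂.le (by linarith) hε (le_max_right _ _))

lemma negliPt_combine {w : ℝ → ℝ → ℂ} (hw : ∀ j, NegliPt w j) (k m : ℕ) :
    ∃ C > 0, ∃ ε₀ ∈ Set.Ioc (0:ℝ) 1, ∀ ε ∈ Set.Ioc (0:ℝ) 1, ε ≤ ε₀ →
      ∀ j ≤ k, ∀ x, ‖iteratedDeriv j (w ε) x‖ ≤ C * ε ^ m := by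
  induction k with
  | zero =>
    obtain ⟨C, hC, ε₀, hε₀, H⟩ := hw 0 m
    exact ⟨C, hC, ε₀, hε₀, fun ε hε hεε j hj x => by
      rw [Nat.le_zero.1 hj]; exact H ε hε hεε x⟩
  | succ k ih =>
    obtain ⟨C₁, hC₁, ε₁, hε₁, H₁⟩ := ih
    obtain ⟨C₂, hC₂, ε₂, hε₂, H₂⟩ := hw (k + 1) m
    refine ⟨C₁ + C₂, by positivity, min ε₁ ε₂,
      ⟨lt_min hε₁.1 hε₂.1, (min_le_left _ _).trans hε₁.2⟩, ?_⟩
    intro ε hε hεε j hj x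
    have hεm : (0:ℝ) ≤ ε ^ m := (pow_pos hε.1 m).le
    rcases Nat.lt_succ_iff_lt_or_eq.1 (Nat.lt_succ_of_le hj) with hj' | hj'
    · refine (H₁ ε hε (hεε.trans (min_le_left _ _)) j (Nat.lt_succ_iff.1 hj') x).trans ?_
      nlinarith
    · rw [hj']
      refine (H₂ ε hε (hεε.trans (min_le_right _ _)) x).trans ?_
      nlinarith

lemma iteratedDeriv_sub' {f g : ℝ → ℂ} (hf : ContDiff ℝ (⊤ : ℕ∞) f)
    (hg : ContDiff ℝ (⊤ : ℕ∞) g) (j : ℕ) (x : ℝ) :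
    iteratedDeriv j (fun x => f x - g x) x = iteratedDeriv j f x - iteratedDeriv j g x := by
  have hfj : ContDiff ℝ (j : ℕ) f := hf.of_le (by exact_mod_cast le_top)
  have hgj : ContDiff ℝ (j : ℕ) (fun x => -g x) := (hg.neg).of_le (by exact_mod_cast le_top)
  have e : (fun x => f x - g x) = f + fun x => -g x := by
    funext y; simp [sub_eq_add_neg]
  simp only [iteratedDeriv_eq_iteratedFDeriv]
  rw [e, iteratedFDeriv_add_apply hfj.contDiffAt hgj.contDiffAt]
  have hneg : iteratedFDeriv ℝ j (fun x => -g x) x = -iteratedFDeriv ℝ j g x := by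
    have := iteratedFDeriv_neg_apply (𝕜 := ℝ) (i := j) (f := g) (x := x)
    exact this
  rw [ContinuousMultilinearMap.add_apply, hneg]
  simp [sub_eq_add_neg]

lemma norm_fderiv_le_iteratedFDeriv_one (F : ℂ → ℂ) (z : ℂ) :
    ‖fderiv ℝ F z‖ ≤ ‖iteratedFDeriv ℝ 1 F z‖ := by
  refine ContinuousLinearMap.opNorm_le_bound _ (norm_nonneg _) fun w => ?_
  have h1 : iteratedFDeriv ℝ 1 F z (fun _ => w) = fderiv ℝ F z w := iteratedFDeriv_one_apply _
  rw [← h1]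
  have := (iteratedFDeriv ℝ 1 F z).le_opNorm (fun _ => w)
  simpa using this

lemma landau_step {f : ℝ → ℂ} (hf : ContDiff ℝ (⊤ : ℕ∞) f) {M₀ M₂ : ℝ}
    (h0 : ∀ x, ‖f x‖ ≤ M₀) (h2 : ∀ x, ‖iteratedDeriv 2 f x‖ ≤ M₂) {h : ℝ} (hh : 0 < h)
    (x : ℝ) : ‖deriv f x‖ ≤ 2 * M₀ / h + h * M₂ := by
  have hM₂0 : 0 ≤ M₂ := le_trans (norm_nonneg _) (h2 0)
  have hdf : Differentiable ℝ f := hf.differentiable (by simp)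
  have hdf' : Differentiable ℝ (deriv f) := by
    have : ContDiff ℝ (⊤ : ℕ∞) (deriv f) := by
      have := contDiff_iteratedDeriv hf 1
      rwa [iteratedDeriv_one] at this
    exact this.differentiable (by simp)
  have hdd : deriv (deriv f) = iteratedDeriv 2 f := by
    rw [iteratedDeriv_succ, iteratedDeriv_one]
  -- Lipschitz bound for deriv f
  have hlip : ∀ y z : ℝ, ‖deriv f y - deriv f z‖ ≤ M₂ * ‖y - z‖ := by
    intro y z
    refine Convex.norm_image_sub_le_of_norm_deriv_le (f := deriv f)
      (fun a _ => (hdf' a)) (fun a _ => ?_) convex_univ (Set.mem_univ z) (Set.mem_univ y)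
    rw [hdd]
    exact h2 a
  -- the auxiliary function
  set c : ℂ := deriv f x with hc
  set φ : ℝ → ℂ := fun y => f y - f x - (y - x) • c with hφ
  have hφx : φ x = 0 := by simp [hφ]
  have hφd : ∀ y, HasDerivAt φ (deriv f y - c) y := by
    intro y
    have h1 : HasDerivAt (fun y : ℝ => f y - f x) (deriv f y) y :=
      ((hdf y).hasDerivAt).sub_const (f x)
    have h2' : HasDerivAt (fun y : ℝ => (y - x) • c) ((1:ℝ) • c) y :=
      ((hasDerivAt_id y).sub_const x).smul_const c
    have h3 := h1.sub h2'
    rw [one_smul] at h3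
    exact h3
  have hseg := norm_image_sub_le_of_norm_deriv_le_segment'
    (f := φ) (f' := fun y => deriv f y - c) (a := x) (b := x + h) (C := M₂ * h)
    (fun y _ => (hφd y).hasDerivWithinAt) ?_ (x + h) (by constructor <;> nlinarith)
  swap
  · intro y hy
    refine (hlip y x).trans ?_
    have : ‖y - x‖ ≤ h := by
      rw [Real.norm_eq_abs, abs_le]
      obtain ⟨hy1, hy2⟩ := hy
      constructor <;> nlinarith
    nlinarith
  rw [hφx, sub_zero] at hseg
  have hkey : ‖φ (x + h)‖ ≤ M₂ * h * h := by
    have : x + h - x = h := by ring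
    rwa [this] at hseg
  have hsmul : (h : ℝ) • c = f (x + h) - f x - φ (x + h) := by
    simp [hφ]
  have hnorm : h * ‖c‖ ≤ 2 * M₀ + M₂ * h * h := by
    have h1 : ‖(h : ℝ) • c‖ = h * ‖c‖ := by
      rw [norm_smul, Real.norm_eq_abs, abs_of_pos hh]
    calc h * ‖c‖ = ‖(h : ℝ) • c‖ := h1.symm
      _ = ‖f (x + h) - f x - φ (x + h)‖ := by rw [hsmul]
      _ ≤ ‖f (x + h)‖ + ‖f x‖ + ‖φ (x + h)‖ := by
          refine (norm_sub_le _ _).trans ?_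
          gcongr
          exact norm_sub_le _ _
      _ ≤ M₀ + M₀ + M₂ * h * h := by gcongr <;> first | exact h0 _ | exact hkey
      _ = 2 * M₀ + M₂ * h * h := by ring
  have hfin : ‖c‖ ≤ (2 * M₀ + M₂ * h * h) / h := by
    rw [le_div_iff₀ hh]
    nlinarith
  calc ‖deriv f x‖ = ‖c‖ := rfl
    _ ≤ (2 * M₀ + M₂ * h * h) / h := hfin
    _ = 2 * M₀ / h + h * M₂ := by
        rw [add_div]
        congr 1
        field_simp

lemma negli_upgrade {w : ℝ → ℝ → ℂ} (hsm : ∀ ε ∈ Set.Ioc (0:ℝ) 1, ContDiff ℝ (⊤ : ℕ∞) (w ε))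
    (hmod : ∀ j, ModPt w j) (h0 : NegliPt w 0) : ∀ j, NegliPt w j := by
  intro j
  induction j with
  | zero => exact h0
  | succ j ih =>
    intro m
    obtain ⟨m₂, C₂, hC₂, ε₂, hε₂, H₂⟩ := hmod (j + 2)
    obtain ⟨C₁, hC₁, ε₁, hε₁, H₁⟩ := ih (2 * m + m₂)
    refine ⟨2 * C₁ + C₂, by positivity, min ε₁ ε₂,
      ⟨lt_min hε₁.1 hε₂.1, (min_le_left _ _).trans hε₁.2⟩, ?_⟩
    intro ε hε hεε x
    set h : ℝ := ε ^ (m + m₂) with hhdef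
    have hh : 0 < h := pow_pos hε.1 _
    have hfj : ContDiff ℝ (⊤ : ℕ∞) (iteratedDeriv j (w ε)) :=
      contDiff_iteratedDeriv (hsm ε hε) j
    have hb0 : ∀ y, ‖iteratedDeriv j (w ε) y‖ ≤ C₁ * ε ^ (2 * m + m₂) :=
      H₁ ε hε (hεε.trans (min_le_left _ _))
    have hb2 : ∀ y, ‖iteratedDeriv 2 (iteratedDeriv j (w ε)) y‖ ≤ C₂ / ε ^ m₂ := by
      intro y
      have e2 : iteratedDeriv 2 (iteratedDeriv j (w ε)) = iteratedDeriv (j + 2) (w ε) := by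
        rw [show (2:ℕ) = 1 + 1 from rfl, iteratedDeriv_succ, iteratedDeriv_one,
          show j + (1 + 1) = (j + 1) + 1 from by ring, iteratedDeriv_succ, iteratedDeriv_succ]
      rw [e2]
      exact H₂ ε hε (hεε.trans (min_le_right _ _)) y
    have hlan := landau_step hfj hb0 hb2 hh x
    rw [← iteratedDeriv_succ] at hlan
    refine hlan.trans ?_
    have harith : 2 * (C₁ * ε ^ (2 * m + m₂)) / h + h * (C₂ / ε ^ m₂)
        = (2 * C₁ + C₂) * ε ^ m := by
      rw [hhdef]
      have hεne : (ε : ℝ) ≠ 0 := ne_of_gt hε.1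
      field_simp
      ring
    rw [← harith]

lemma diff_negliPt0 (F : ℂ → ℂ) (hF : ContDiff ℝ (⊤ : ℕ∞) F)
    (hgrowth : ∀ n : ℕ, ∃ C > (0:ℝ), ∃ N : ℕ, ∀ z : ℂ,
      ‖iteratedFDeriv ℝ n F z‖ ≤ C * (1 + ‖z‖) ^ N)
    (u v : ℝ → ℝ → ℂ)
    (hu_ap : ∀ ε ∈ Set.Ioc (0:ℝ) 1, BAp (u ε)) (hu : Moderate u)
    (hv_ap : ∀ ε ∈ Set.Ioc (0:ℝ) 1, BAp (v ε)) (hv : Moderate v)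
    (huv : Negligible (fun ε x => u ε x - v ε x)) :
    NegliPt (fun ε x => F (u ε x) - F (v ε x)) 0 := by
  intro m
  obtain ⟨C₁, hC₁, N₁, hN₁⟩ := hgrowth 1
  obtain ⟨mu, Cu, hCu, εu, hεu, Hu⟩ := hu 0
  obtain ⟨mv, Cv, hCv, εv, hεv, Hv⟩ := hv 0
  set mR : ℕ := max mu mv with hmR
  obtain ⟨C₂, hC₂, ε₂, hε₂, H₂⟩ := huv 0 (m + mR * N₁)
  refine ⟨C₁ * (1 + Cu + Cv) ^ N₁ * C₂, by positivity, min (min εu εv) ε₂,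
    ⟨lt_min (lt_min hεu.1 hεv.1) hε₂.1,
      ((min_le_left _ _).trans (min_le_left _ _)).trans hεu.2⟩, ?_⟩
  intro ε hε hεε x
  have hεu' : ε ≤ εu := hεε.trans ((min_le_left _ _).trans (min_le_left _ _))
  have hεv' : ε ≤ εv := hεε.trans ((min_le_left _ _).trans (min_le_right _ _))
  have hε₂' : ε ≤ ε₂ := hεε.trans (min_le_right _ _)
  have hεpos := hε.1
  have hεmR : (0:ℝ) < ε ^ mR := pow_pos hεpos _
  set R' : ℝ := (Cu + Cv) / ε ^ mR with hR'
  have hR'0 : 0 ≤ R' := le_of_lt (div_pos (by linarith) hεmR)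
  have hub : ∀ y, ‖u ε y‖ ≤ R' := by
    intro y
    have h1 : ‖iteratedDeriv 0 (u ε) y‖ ≤ apSeminorm 0 (u ε) :=
      norm_le_apSeminorm (hu_ap ε hε) le_rfl y
    rw [iteratedDeriv_zero] at h1
    refine h1.trans ((Hu ε hε hεu').trans ?_)
    exact div_pow_mono hCu.le (by linarith) hε (le_max_left _ _)
  have hvb : ∀ y, ‖v ε y‖ ≤ R' := by
    intro y
    have h1 : ‖iteratedDeriv 0 (v ε) y‖ ≤ apSeminorm 0 (v ε) :=
      norm_le_apSeminorm (hv_ap ε hε) le_rfl y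
    rw [iteratedDeriv_zero] at h1
    refine h1.trans ((Hv ε hε hεv').trans ?_)
    exact div_pow_mono hCv.le (by linarith) hε (le_max_right _ _)
  have hmv : ‖F (u ε x) - F (v ε x)‖ ≤ C₁ * (1 + R') ^ N₁ * ‖u ε x - v ε x‖ := by
    refine Convex.norm_image_sub_le_of_norm_fderiv_le
      (fun z _ => (hF.differentiable (by simp)).differentiableAt)
      (fun z hz => ?_) (convex_closedBall (0:ℂ) R')
      (Metric.mem_closedBall.2 (by simpa [dist_zero_right] using hvb x))
      (Metric.mem_closedBall.2 (by simpa [dist_zero_right] using hub x))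
    refine (norm_fderiv_le_iteratedFDeriv_one F z).trans ((hN₁ z).trans ?_)
    have hz' : ‖z‖ ≤ R' := by simpa [dist_zero_right] using Metric.mem_closedBall.1 hz
    have hmono : (1 + ‖z‖) ^ N₁ ≤ (1 + R') ^ N₁ :=
      pow_le_pow_left₀ (by positivity) (by linarith) N₁
    exact mul_le_mul_of_nonneg_left hmono hC₁.le
  have huvb : ‖u ε x - v ε x‖ ≤ C₂ * ε ^ (m + mR * N₁) := by
    obtain ⟨Mu, _, hMu⟩ := ((hu_ap ε hε).2 0).bounded
    obtain ⟨Mv, _, hMv⟩ := ((hv_ap ε hε).2 0).bounded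
    rw [iteratedDeriv_zero] at hMu hMv
    have hbdd : BddAbove (Set.range fun y => ‖u ε y - v ε y‖) := by
      refine ⟨Mu + Mv, ?_⟩
      rintro _ ⟨y, rfl⟩
      exact (norm_sub_le _ _).trans (add_le_add (hMu y) (hMv y))
    have h1 : ‖u ε x - v ε x‖ ≤ ⨆ y, ‖u ε y - v ε y‖ := le_ciSup hbdd x
    refine h1.trans ?_
    have h2 := H₂ ε hε hε₂'
    have e : apSeminorm 0 (fun y => u ε y - v ε y) = ⨆ y, ‖u ε y - v ε y‖ := by
      simp [apSeminorm, iteratedDeriv_zero]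
    rw [e] at h2
    exact h2
  rw [iteratedDeriv_zero]
  refine hmv.trans ?_
  have hR'le : 1 + R' ≤ (1 + Cu + Cv) / ε ^ mR := by
    have hεm1 : ε ^ mR ≤ 1 := pow_le_one₀ hεpos.le hε.2
    have h1 : (1:ℝ) ≤ 1 / ε ^ mR := by
      rw [le_div_iff₀ hεmR, one_mul]; exact hεm1
    have e1 : (1 + Cu + Cv) / ε ^ mR = 1 / ε ^ mR + (Cu + Cv) / ε ^ mR := by ring
    rw [hR', e1]
    linarith
  have hpow : (1 + R') ^ N₁ ≤ ((1 + Cu + Cv) / ε ^ mR) ^ N₁ := by gcongr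
  have hnn : (0:ℝ) ≤ ‖u ε x - v ε x‖ := norm_nonneg _
  calc C₁ * (1 + R') ^ N₁ * ‖u ε x - v ε x‖
      ≤ C₁ * ((1 + Cu + Cv) / ε ^ mR) ^ N₁ * (C₂ * ε ^ (m + mR * N₁)) := by
        have h1 : (0:ℝ) ≤ (1 + R') ^ N₁ := by positivity
        have h2 : (0:ℝ) ≤ C₁ := hC₁.le
        nlinarith [mul_le_mul (mul_le_mul le_rfl hpow h1 h2) huvb hnn
          (by positivity : (0:ℝ) ≤ C₁ * ((1 + Cu + Cv) / ε ^ mR) ^ N₁)]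
    _ = C₁ * (1 + Cu + Cv) ^ N₁ * C₂ * ε ^ m := by
        have hεne : (ε : ℝ) ≠ 0 := ne_of_gt hεpos
        rw [div_pow, ← pow_mul, pow_add]
        have hp : ε ^ (mR * N₁) ≠ 0 := pow_ne_zero _ hεne
        field_simp

/-- composition with a smooth slowly increasing function `F : ℂ → ℂ`
maps `𝓖_ap` to `𝓖_ap`: it preserves moderateness, membership in `𝓑_ap`, and
negligibility of differences. -/
theorem gap_composition (F : ℂ → ℂ) (hF : ContDiff ℝ (⊤ : ℕ∞) F)
    (hgrowth : ∀ n : ℕ, ∃ C > (0:ℝ), ∃ N : ℕ, ∀ z : ℂ,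
      ‖iteratedFDeriv ℝ n F z‖ ≤ C * (1 + ‖z‖) ^ N)
    (u v : ℝ → ℝ → ℂ)
    (hu_ap : ∀ ε ∈ Set.Ioc (0:ℝ) 1, BAp (u ε)) (hu : Moderate u)
    (hv_ap : ∀ ε ∈ Set.Ioc (0:ℝ) 1, BAp (v ε)) (hv : Moderate v)
    (huv : Negligible (fun ε x => u ε x - v ε x)) :
    ((∀ ε ∈ Set.Ioc (0:ℝ) 1, BAp (fun x => F (u ε x))) ∧
        Moderate (fun ε x => F (u ε x))) ∧
      Negligible (fun ε x => F (u ε x) - F (v ε x)) := by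
  refine ⟨⟨?_, ?_⟩, ?_⟩
  · -- BAp
    intro ε hε
    obtain hBap := hu_ap ε hε
    refine ⟨hF.comp hBap.1, fun j => ?_⟩
    have hrw : iteratedDeriv j (fun x => F (u ε x))
        = fun x => FaaPsi F j (fun i : Fin (j + 1) => iteratedDeriv (i : ℕ) (u ε) x) :=
      funext (faaPsi_spec F hF hBap.1 j)
    rw [hrw]
    exact almostPeriodic_comp (FaaPsi F j)
      ((faaPsi_contDiff F hF j).continuous) _ (fun i => hBap.2 (i : ℕ))
  · -- Moderate
    intro k
    obtain ⟨m, C, hC, ε₀, hε₀, H⟩ :=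
      modPt_combine (comp_modPt F hF hgrowth u hu_ap hu) k
    refine ⟨m, (k + 1) * C, by positivity, ε₀, hε₀, ?_⟩
    intro ε hε hεε
    have hb : (0:ℝ) ≤ C / ε ^ m := le_of_lt (div_pos hC (pow_pos hε.1 m))
    have := apSeminorm_le_of_pointwise (f := fun x => F (u ε x)) (k := k) hb
      (fun j hj x => H ε hε hεε j hj x)
    calc apSeminorm k (fun x => F (u ε x)) ≤ (k + 1) * (C / ε ^ m) := this
      _ = (k + 1) * C / ε ^ m := by ring
  · -- Negligible
    have hsm : ∀ ε ∈ Set.Ioc (0:ℝ) 1,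
        ContDiff ℝ (⊤ : ℕ∞) ((fun ε x => F (u ε x) - F (v ε x)) ε) := fun ε hε =>
      (hF.comp (hu_ap ε hε).1).sub (hF.comp (hv_ap ε hε).1)
    have hmodw : ∀ j, ModPt (fun ε x => F (u ε x) - F (v ε x)) j := by
      intro j
      obtain ⟨m₁, C₁, hC₁, ε₁, hε₁, H₁⟩ := comp_modPt F hF hgrowth u hu_ap hu j
      obtain ⟨m₂, C₂, hC₂, ε₂, hε₂, H₂⟩ := comp_modPt F hF hgrowth v hv_ap hv j
      refine ⟨max m₁ m₂, C₁ + C₂, by positivity, min ε₁ ε₂,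
        ⟨lt_min hε₁.1 hε₂.1, (min_le_left _ _).trans hε₁.2⟩, ?_⟩
      intro ε hε hεε x
      have hsub := iteratedDeriv_sub' (f := fun x => F (u ε x)) (g := fun x => F (v ε x))
        (hF.comp (hu_ap ε hε).1) (hF.comp (hv_ap ε hε).1) j x
      show ‖iteratedDeriv j (fun x => F (u ε x) - F (v ε x)) x‖ ≤ _
      rw [hsub]
      have b1 := (H₁ ε hε (hεε.trans (min_le_left _ _)) x).trans
        (div_pow_mono hC₁.le le_rfl hε (le_max_left m₁ m₂))
      have b2 := (H₂ ε hε (hεε.trans (min_le_right _ _)) x).trans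
        (div_pow_mono hC₂.le le_rfl hε (le_max_right m₁ m₂))
      calc ‖iteratedDeriv j (fun x => F (u ε x)) x - iteratedDeriv j (fun x => F (v ε x)) x‖
          ≤ ‖iteratedDeriv j (fun x => F (u ε x)) x‖
            + ‖iteratedDeriv j (fun x => F (v ε x)) x‖ := norm_sub_le _ _
        _ ≤ C₁ / ε ^ max m₁ m₂ + C₂ / ε ^ max m₁ m₂ := add_le_add b1 b2
        _ = (C₁ + C₂) / ε ^ max m₁ m₂ := (add_div _ _ _).symm
    have h0 := diff_negliPt0 F hF hgrowth u v hu_ap hu hv_ap hv huv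
    have hall := negli_upgrade hsm hmodw h0
    intro k m
    obtain ⟨C, hC, ε₀, hε₀, H⟩ := negliPt_combine hall k m
    refine ⟨(k + 1) * C, by positivity, ε₀, hε₀, ?_⟩
    intro ε hε hεε
    have hb : (0:ℝ) ≤ C * ε ^ m := le_of_lt (mul_pos hC (pow_pos hε.1 m))
    have := apSeminorm_le_of_pointwise (f := fun x => F (u ε x) - F (v ε x)) (k := k) hb
      (fun j hj x => H ε hε hεε j hj x)
    calc apSeminorm k (fun x => F (u ε x) - F (v ε x)) ≤ (k + 1) * (C * ε ^ m) := this
      _ = (k + 1) * C * ε ^ m := by ring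
end
end

section
/- Let l ∈ ℕ and f_0, …, f_l ∈ L¹(ℝ, ℂ). If (u_ε)_{ε∈(0,1]} is a negligible net of elements of 𝓑_ap, then the net w_ε(x) = Σ_{i≤l} (u_ε^{(i)} * f_i)(x) is negligible. Consequently, convolution with the integrable distribution Σ_i f_i^{(i)} is well defined on the quotient 𝓖_ap, independently of the chosen representative. -/
open Filter MeasureTheory Topology

noncomputable section

/-- An almost periodic function is bounded. -/
lemma ap_bounded {f : ℝ → ℂ} (h : AlmostPeriodic f) : ∃ M : ℝ, ∀ x, ‖f x‖ ≤ M := by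
  by_contra hc
  push_neg at hc
  have hex : ∀ n : ℕ, ∃ x : ℝ, (n : ℝ) < ‖f x‖ := fun n => hc n
  choose hfn hhn using hex
  obtain ⟨φ, hφ, g, hg⟩ := h.2 hfn
  have h1 : Tendsto (fun k => ‖f (0 + hfn (φ k))‖) atTop (𝓝 ‖g 0‖) :=
    (hg.tendsto_at 0).norm
  have h2 : Tendsto (fun k => ‖f (0 + hfn (φ k))‖) atTop atTop := by
    apply tendsto_atTop_mono _ tendsto_natCast_atTop_atTop
    intro k
    simp only [zero_add]
    calc (k : ℝ) ≤ (φ k : ℝ) := by exact_mod_cast hφ.id_le k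
      _ ≤ ‖f (hfn (φ k))‖ := (hhn (φ k)).le
  exact not_tendsto_atTop_of_tendsto_nhds h1 h2

/-- Differentiating a convolution with an integrable function, when the smooth factor
has bounded value and bounded derivative. -/
lemma conv_hasDerivAt {g f : ℝ → ℂ} (hf : Integrable f)
    (hgd : Differentiable ℝ g) (hgc : Continuous (deriv g))
    {Mg M : ℝ} (hMg : ∀ x, ‖g x‖ ≤ Mg) (hM : ∀ x, ‖deriv g x‖ ≤ M) (x₀ : ℝ) :
    HasDerivAt (fun x => ∫ y, g (x - y) * f y) (∫ y, deriv g (x₀ - y) * f y) x₀ := by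
  have key := hasDerivAt_integral_of_dominated_loc_of_deriv_le (μ := volume) (x₀ := x₀)
    (F := fun x y => g (x - y) * f y) (F' := fun x y => deriv g (x - y) * f y)
    (bound := fun y => M * ‖f y‖) (s := Metric.ball x₀ 1) (Metric.ball_mem_nhds x₀ one_pos) ?_ ?_ ?_ ?_ ?_ ?_
  · exact key.2
  · filter_upwards with x
    exact ((hgd.continuous.comp (continuous_const.sub continuous_id)).aestronglyMeasurable).mul
      hf.aestronglyMeasurable
  · exact hf.bdd_mul
      ((hgd.continuous.comp (continuous_const.sub continuous_id)).aestronglyMeasurable)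
      (c := Mg) (Filter.Eventually.of_forall fun y => hMg _)
  · exact ((hgc.comp (continuous_const.sub continuous_id)).aestronglyMeasurable).mul
      hf.aestronglyMeasurable
  · filter_upwards with y
    intro x hx
    rw [norm_mul]
    exact mul_le_mul_of_nonneg_right (hM _) (norm_nonneg _)
  · exact hf.norm.const_mul M
  · filter_upwards with y
    intro x hx
    have h2 : HasDerivAt g (deriv g (x - y)) (x - y) := (hgd (x - y)).hasDerivAt
    exact (h2.comp_sub_const x y).mul_const (f y)

/-- Iterated derivatives of the convolution-sum. -/
lemma conv_sum_iteratedDeriv (l : ℕ) (f : ℕ → ℝ → ℂ) (hf : ∀ i ≤ l, Integrable (f i))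
    {v : ℝ → ℂ} (hv : ContDiff ℝ (⊤ : ℕ∞) v)
    (hb : ∀ n : ℕ, ∃ M : ℝ, ∀ x, ‖iteratedDeriv n v x‖ ≤ M) (j : ℕ) :
    iteratedDeriv j
        (fun x => ∑ i ∈ Finset.range (l + 1), ∫ y, iteratedDeriv i v (x - y) * f i y)
      = fun x => ∑ i ∈ Finset.range (l + 1), ∫ y, iteratedDeriv (i + j) v (x - y) * f i y := by
  induction j with
  | zero => simp
  | succ j ih =>
    rw [iteratedDeriv_succ, ih]
    funext x
    have key : HasDerivAt
        (fun x => ∑ i ∈ Finset.range (l + 1), ∫ y, iteratedDeriv (i + j) v (x - y) * f i y)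
        (∑ i ∈ Finset.range (l + 1), ∫ y, iteratedDeriv (i + j + 1) v (x - y) * f i y) x := by
      apply HasDerivAt.fun_sum
      intro i hi
      obtain ⟨Mg, hMg⟩ := hb (i + j)
      obtain ⟨M, hM⟩ := hb (i + j + 1)
      have hdv : deriv (iteratedDeriv (i + j) v) = iteratedDeriv (i + j + 1) v :=
        (iteratedDeriv_succ).symm
      have hdiff : Differentiable ℝ (iteratedDeriv (i + j) v) :=
        hv.differentiable_iteratedDeriv (i + j)
          (by exact_mod_cast lt_top_iff_ne_top.mpr (ENat.coe_ne_top (i + j)))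
      have hcont : Continuous (deriv (iteratedDeriv (i + j) v)) := by
        rw [hdv]
        exact hv.continuous_iteratedDeriv (i + j + 1) (by exact_mod_cast le_top)
      have hM' : ∀ x, ‖deriv (iteratedDeriv (i + j) v) x‖ ≤ M := by
        rw [hdv]; exact hM
      have := conv_hasDerivAt (hf i (Nat.lt_succ_iff.mp (Finset.mem_range.mp hi)))
        hdiff hcont hMg hM' x
      rw [hdv] at this
      exact this
    have : deriv
        (fun x => ∑ i ∈ Finset.range (l + 1), ∫ y, iteratedDeriv (i + j) v (x - y) * f i y) x
      = ∑ i ∈ Finset.range (l + 1), ∫ y, iteratedDeriv (i + j + 1) v (x - y) * f i y := key.deriv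
    exact this

/-- convolution with an integrable distribution `Σ_{i ≤ l} f_i^{(i)}`
maps negligible nets to negligible nets, hence is well defined on `𝓖_ap`. -/
theorem gap_conv_integrable_negligible (l : ℕ) (f : ℕ → ℝ → ℂ)
    (hf : ∀ i ≤ l, Integrable (f i))
    (u : ℝ → ℝ → ℂ) (hu_ap : ∀ ε ∈ Set.Ioc (0:ℝ) 1, BAp (u ε)) (hu : Negligible u) :
    Negligible (fun ε x => ∑ i ∈ Finset.range (l + 1),
      ∫ y : ℝ, iteratedDeriv i (u ε) (x - y) * f i y) := by
  intro k m
  obtain ⟨C, hC, ε₀, hε₀, hbound⟩ := hu (k + l) m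
  set B : ℝ := ∑ i ∈ Finset.range (l + 1), ∫ y, ‖f i y‖ with hB
  have hBnn : 0 ≤ B :=
    Finset.sum_nonneg fun i _ => integral_nonneg fun y => norm_nonneg _
  refine ⟨(k + 1) * (B + 1) * C, by positivity, ε₀, hε₀, ?_⟩
  intro ε hε hεε₀
  have hap := hu_ap ε hε
  -- Bounds on all iterated derivatives of u ε.
  have hb : ∀ n : ℕ, ∃ M : ℝ, ∀ x, ‖iteratedDeriv n (u ε) x‖ ≤ M :=
    fun n => ap_bounded (hap.2 n)
  have hbdd : ∀ n : ℕ, BddAbove (Set.range fun x => ‖iteratedDeriv n (u ε) x‖) := by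
    intro n
    obtain ⟨M, hM⟩ := hb n
    exact ⟨M, by rintro r ⟨x, rfl⟩; exact hM x⟩
  have hSnn : ∀ n : ℕ, 0 ≤ ⨆ x : ℝ, ‖iteratedDeriv n (u ε) x‖ :=
    fun n => Real.iSup_nonneg fun x => norm_nonneg _
  -- key bound: sup of nth derivative ≤ apSeminorm (k+l) when n ≤ k + l
  have hS_le : ∀ n ≤ k + l, (⨆ x : ℝ, ‖iteratedDeriv n (u ε) x‖) ≤ apSeminorm (k + l) (u ε) := by
    intro n hn
    apply Finset.single_le_sum (f := fun j => ⨆ x : ℝ, ‖iteratedDeriv j (u ε) x‖)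
      (fun j _ => hSnn j)
    exact Finset.mem_range.mpr (Nat.lt_succ_of_le hn)
  set S : ℝ := apSeminorm (k + l) (u ε) with hSdef
  have hSnn' : 0 ≤ S := Finset.sum_nonneg fun j _ => hSnn j
  -- pointwise bound for each iterated derivative of the convolution sum
  have hkey : apSeminorm k (fun x => ∑ i ∈ Finset.range (l + 1),
      ∫ y : ℝ, iteratedDeriv i (u ε) (x - y) * f i y) ≤ (k + 1) * ((B + 1) * S) := by
    rw [apSeminorm]
    have hterm : ∀ j ∈ Finset.range (k + 1),
        (⨆ x : ℝ, ‖iteratedDeriv j (fun x => ∑ i ∈ Finset.range (l + 1),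
          ∫ y : ℝ, iteratedDeriv i (u ε) (x - y) * f i y) x‖) ≤ (B + 1) * S := by
      intro j hj
      have hjk : j ≤ k := Nat.lt_succ_iff.mp (Finset.mem_range.mp hj)
      rw [conv_sum_iteratedDeriv l f hf hap.1 hb j]
      apply Real.iSup_le _ (by positivity)
      intro x
      calc ‖∑ i ∈ Finset.range (l + 1), ∫ y, iteratedDeriv (i + j) (u ε) (x - y) * f i y‖
          ≤ ∑ i ∈ Finset.range (l + 1), ‖∫ y, iteratedDeriv (i + j) (u ε) (x - y) * f i y‖ :=
            norm_sum_le _ _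
        _ ≤ ∑ i ∈ Finset.range (l + 1), S * ∫ y, ‖f i y‖ := by
            apply Finset.sum_le_sum
            intro i hi
            have hil : i ≤ l := Nat.lt_succ_iff.mp (Finset.mem_range.mp hi)
            have hnorm : ‖∫ y, iteratedDeriv (i + j) (u ε) (x - y) * f i y‖
                ≤ ∫ y, S * ‖f i y‖ := by
              apply norm_integral_le_of_norm_le ((hf i hil).norm.const_mul S)
              filter_upwards with y
              rw [norm_mul]
              apply mul_le_mul_of_nonneg_right _ (norm_nonneg _)
              calc ‖iteratedDeriv (i + j) (u ε) (x - y)‖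
                  ≤ ⨆ z : ℝ, ‖iteratedDeriv (i + j) (u ε) z‖ :=
                    le_ciSup (hbdd (i + j)) (x - y)
                _ ≤ S := hS_le (i + j) (by omega)
            calc ‖∫ y, iteratedDeriv (i + j) (u ε) (x - y) * f i y‖
                ≤ ∫ y, S * ‖f i y‖ := hnorm
              _ = S * ∫ y, ‖f i y‖ := integral_const_mul _ _
        _ = S * B := by rw [hB, Finset.mul_sum]
        _ ≤ (B + 1) * S := by nlinarith
    calc (∑ j ∈ Finset.range (k + 1), ⨆ x : ℝ, ‖iteratedDeriv j (fun x =>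
          ∑ i ∈ Finset.range (l + 1), ∫ y : ℝ, iteratedDeriv i (u ε) (x - y) * f i y) x‖)
        ≤ ∑ _j ∈ Finset.range (k + 1), (B + 1) * S := Finset.sum_le_sum hterm
      _ = (k + 1) * ((B + 1) * S) := by
          rw [Finset.sum_const, Finset.card_range, nsmul_eq_mul]
          push_cast
          ring
  have hSle : S ≤ C * ε ^ m := hbound ε hε hεε₀
  calc apSeminorm k (fun x => ∑ i ∈ Finset.range (l + 1),
        ∫ y : ℝ, iteratedDeriv i (u ε) (x - y) * f i y)
      ≤ (k + 1) * ((B + 1) * S) := hkey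
    _ ≤ (k + 1) * ((B + 1) * (C * ε ^ m)) := by
        apply mul_le_mul_of_nonneg_left _ (by positivity)
        exact mul_le_mul_of_nonneg_left hSle (by positivity)
    _ = (k + 1) * (B + 1) * C * ε ^ m := by ring
end
end

section
/- Generalized Bohl–Bohr theorem: let (u_ε)_{ε∈(0,1]} be a moderate net of elements of 𝓑_ap, fix x₀ ∈ ℝ, and define the primitives U_ε(x) = ∫_{x₀}^{x} u_ε(t) dt. Then the following are equivalent: (i) each U_ε belongs to 𝓑_ap and the net (U_ε)_{ε∈(0,1]} is moderate; (ii) each U_ε is bounded on ℝ and there exist m ∈ ℕ, C > 0 and ε₀ ∈ (0,1] such that sup_{x∈ℝ} |U_ε(x)| ≤ C ε^{−m} for all ε ≤ ε₀. -/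
open Filter MeasureTheory Topology

noncomputable section

lemma bb_tu_comp {F : ℕ → ℝ → ℂ} {g : ℝ → ℂ} (h : TendstoUniformly F g atTop)
    {φ : ℕ → ℕ} (hφ : StrictMono φ) : TendstoUniformly (fun k => F (φ k)) g atTop := by
  rw [Metric.tendstoUniformly_iff] at h ⊢
  intro ε hε
  exact hφ.tendsto_atTop.eventually (h ε hε)

lemma bb_ap_bounded {f : ℝ → ℂ} (hf : AlmostPeriodic f) : ∃ M : ℝ, 0 ≤ M ∧ ∀ x, ‖f x‖ ≤ M := by
  by_contra hcon
  push_neg at hcon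
  have h : ∀ n : ℕ, ∃ x, (n : ℝ) < ‖f x‖ := by
    intro n
    obtain ⟨x, hx⟩ := hcon n (Nat.cast_nonneg n)
    exact ⟨x, hx⟩
  choose xs hxs using h
  obtain ⟨φ, hφ, g, hg⟩ := hf.2 xs
  have h0 : Tendsto (fun k => f (0 + xs (φ k))) atTop (𝓝 (g 0)) := hg.tendsto_at 0
  have h1 : Tendsto (fun k => ‖f (0 + xs (φ k))‖) atTop (𝓝 ‖g 0‖) := h0.norm
  have h2 : Tendsto (fun k => ‖f (0 + xs (φ k))‖) atTop atTop := by
    apply tendsto_atTop_mono (fun k => ?_) tendsto_natCast_atTop_atTop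
    calc (k : ℝ) ≤ (φ k : ℝ) := by exact_mod_cast hφ.le_apply
    _ ≤ ‖f (xs (φ k))‖ := (hxs (φ k)).le
    _ = ‖f (0 + xs (φ k))‖ := by rw [zero_add]
  exact not_tendsto_atTop_of_tendsto_nhds h1 h2

lemma bb_extract {F : ℝ → ℂ} {M L : ℝ}
    (hM : ∀ x, ‖F x‖ ≤ M) (hLip : ∀ x y, ‖F x - F y‖ ≤ L * |x - y|) (b : ℕ → ℝ) :
    ∃ φ : ℕ → ℕ, StrictMono φ ∧ ∃ G : ℝ → ℂ,
      ∀ x, Tendsto (fun k => F (x + b (φ k))) atTop (𝓝 (G x)) := by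
  have hL0 : 0 ≤ L := by
    have h := hLip 1 0
    rw [show |(1:ℝ) - 0| = 1 by norm_num, mul_one] at h
    exact le_trans (norm_nonneg _) h
  have hdist : ∀ x y, dist (F x) (F y) ≤ L * |x - y| := by
    intro x y; rw [dist_eq_norm]; exact hLip x y
  set v : ℕ → ℚ → ℂ := fun n q => F ((q : ℝ) + b n) with hv
  have hmem : ∀ n, v n ∈ Set.univ.pi (fun _ : ℚ => Metric.closedBall (0:ℂ) M) := by
    intro n q _
    simpa [v, Metric.mem_closedBall, dist_eq_norm] using hM ((q : ℝ) + b n)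
  obtain ⟨w, -, φ, hφ, hconv⟩ :=
    (isCompact_univ_pi fun _ : ℚ => isCompact_closedBall (0:ℂ) M).tendsto_subseq hmem
  have hq : ∀ q : ℚ, Tendsto (fun k => F ((q:ℝ) + b (φ k))) atTop (𝓝 (w q)) := by
    intro q
    exact (tendsto_pi_nhds.1 hconv) q
  have key : ∀ x : ℝ, ∃ l, Tendsto (fun k => F (x + b (φ k))) atTop (𝓝 l) := by
    intro x
    apply cauchySeq_tendsto_of_complete
    rw [Metric.cauchySeq_iff]
    intro ε hε
    obtain ⟨q, hq'⟩ := exists_rat_near x (show (0:ℝ) < ε/(3*(L+1)) by positivity)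
    have hc := (hq q).cauchySeq
    rw [Metric.cauchySeq_iff] at hc
    obtain ⟨N, hN⟩ := hc (ε/3) (by positivity)
    refine ⟨N, fun m hm n hn => ?_⟩
    have hxq : L * |x - (q:ℝ)| < ε/3 := by
      calc L * |x - (q:ℝ)| ≤ (L+1) * |x - (q:ℝ)| := by nlinarith [abs_nonneg (x - (q:ℝ))]
      _ < (L+1) * (ε/(3*(L+1))) := by
          apply mul_lt_mul_of_pos_left hq' (by linarith)
      _ = ε/3 := by field_simp
    calc dist (F (x + b (φ m))) (F (x + b (φ n)))
        ≤ dist (F (x + b (φ m))) (F ((q:ℝ) + b (φ m)))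
          + dist (F ((q:ℝ) + b (φ m))) (F ((q:ℝ) + b (φ n)))
          + dist (F ((q:ℝ) + b (φ n))) (F (x + b (φ n))) := dist_triangle4 _ _ _ _
      _ < ε/3 + ε/3 + ε/3 := by
          gcongr
          · calc dist (F (x + b (φ m))) (F ((q:ℝ) + b (φ m))) ≤ L * |x + b (φ m) - ((q:ℝ) + b (φ m))| := hdist _ _
            _ = L * |x - (q:ℝ)| := by ring_nf
            _ < ε/3 := hxq
          · exact hN m hm n hn
          · calc dist (F ((q:ℝ) + b (φ n))) (F (x + b (φ n))) ≤ L * |(q:ℝ) + b (φ n) - (x + b (φ n))| := hdist _ _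
            _ = L * |x - (q:ℝ)| := by rw [abs_sub_comm]; ring_nf
            _ < ε/3 := hxq
      _ = ε := by ring
  choose G hG using key
  exact ⟨φ, hφ, G, hG⟩

lemma bb_int_tendsto {v : ℕ → ℝ → ℂ} {g : ℝ → ℂ} (hv : ∀ n, Continuous (v n)) (hg : Continuous g)
    (h : TendstoUniformly v g atTop) (x : ℝ) :
    Tendsto (fun n => ∫ t in (0:ℝ)..x, v n t) atTop (𝓝 (∫ t in (0:ℝ)..x, g t)) := by
  rw [Metric.tendsto_atTop]
  intro ε hε
  have h' := Metric.tendstoUniformly_iff.1 h (ε/(2*(|x|+1))) (by positivity)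
  obtain ⟨N, hN⟩ := eventually_atTop.1 h'
  refine ⟨N, fun n hn => ?_⟩
  have hint : (∫ t in (0:ℝ)..x, v n t) - ∫ t in (0:ℝ)..x, g t = ∫ t in (0:ℝ)..x, (v n t - g t) :=
    (intervalIntegral.integral_sub ((hv n).intervalIntegrable 0 x) (hg.intervalIntegrable 0 x)).symm
  rw [dist_eq_norm, hint]
  have hb : ‖∫ t in (0:ℝ)..x, (v n t - g t)‖ ≤ (ε/(2*(|x|+1))) * |x - 0| := by
    apply intervalIntegral.norm_integral_le_of_norm_le_const
    intro t _
    rw [← dist_eq_norm, dist_comm]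
    exact (hN n hn t).le
  calc ‖∫ t in (0:ℝ)..x, (v n t - g t)‖ ≤ (ε/(2*(|x|+1))) * |x - 0| := hb
    _ ≤ (ε/(2*(|x|+1))) * (|x|+1) := by
        rw [sub_zero]
        apply mul_le_mul_of_nonneg_left (by linarith [abs_nonneg x]) (by positivity)
    _ = ε/2 := by field_simp
    _ < ε := by linarith


lemma bb_main {f F : ℝ → ℂ} (hf : AlmostPeriodic f)
    (hrep : ∀ a b : ℝ, F b - F a = ∫ t in a..b, f t)
    {CF : ℝ} (hFb : ∀ x, ‖F x‖ ≤ CF) : AlmostPeriodic F := by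
  obtain ⟨Mf, hMf0, hMf⟩ := bb_ap_bounded hf
  have hfc : Continuous f := hf.1
  have hFlip : ∀ x y : ℝ, ‖F x - F y‖ ≤ Mf * |x - y| := by
    intro x y
    rw [hrep y x]
    exact intervalIntegral.norm_integral_le_of_norm_le_const (fun t _ => hMf t)
  have hFcont : Continuous F := by
    have : LipschitzWith (Real.toNNReal Mf) F := by
      apply LipschitzWith.of_dist_le_mul
      intro x y
      rw [dist_eq_norm, Real.dist_eq, Real.coe_toNNReal _ hMf0]
      exact hFlip x y
    exact this.continuous
  refine ⟨hFcont, fun h => ?_⟩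
  obtain ⟨φ₁, hφ₁, gf, hgf⟩ := hf.2 h
  obtain ⟨φ₂, hφ₂, G, hG⟩ := bb_extract hFb hFlip (fun n => h (φ₁ n))
  set c : ℕ → ℝ := fun k => h (φ₁ (φ₂ k)) with hcdef
  have hgfU : TendstoUniformly (fun k x => f (x + c k)) gf atTop := bb_tu_comp hgf hφ₂
  have hgfc : Continuous gf :=
    hgfU.continuous (Frequently.of_forall fun k => hfc.comp (continuous_add_right _))
  refine ⟨φ₁ ∘ φ₂, hφ₁.comp hφ₂, G, ?_⟩
  show TendstoUniformly (fun k x => F (x + c k)) G atTop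
  by_contra hcon
  rw [Metric.tendstoUniformly_iff] at hcon
  push_neg at hcon
  obtain ⟨ε, hε, hfreq⟩ := hcon
  obtain ⟨ψ, hψ, hfreq'⟩ := Filter.extraction_of_frequently_atTop hfreq
  choose xs hxs using hfreq'
  set a : ℕ → ℝ := fun k => c (ψ k) with hadef
  set β : ℕ → ℝ := fun k => xs k + a k with hβdef
  have hgfU₂ : TendstoUniformly (fun k x => f (x + a k)) gf atTop := bb_tu_comp hgfU hψ
  have hG₂ : ∀ x, Tendsto (fun k => F (x + a k)) atTop (𝓝 (G x)) :=
    fun x => (hG x).comp hψ.tendsto_atTop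
  obtain ⟨θ₁, hθ₁, g₂, hg₂⟩ := hf.2 β
  obtain ⟨θ₂, hθ₂, H, hH⟩ := bb_extract hFb hFlip (fun k => β (θ₁ k))
  have hGb : ∀ x, ‖G x‖ ≤ CF :=
    fun x => le_of_tendsto (hG₂ x).norm (Eventually.of_forall fun k => hFb _)
  have hGlip : ∀ x y, ‖G x - G y‖ ≤ Mf * |x - y| := by
    intro x y
    have h1 : Tendsto (fun k => ‖F (x + a k) - F (y + a k)‖) atTop (𝓝 ‖G x - G y‖) :=
      ((hG₂ x).sub (hG₂ y)).norm
    apply le_of_tendsto h1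
    apply Eventually.of_forall
    intro k
    calc ‖F (x + a k) - F (y + a k)‖ ≤ Mf * |x + a k - (y + a k)| := hFlip _ _
      _ = Mf * |x - y| := by ring_nf
  obtain ⟨θ₃, hθ₃, K, hK⟩ := bb_extract hGb hGlip (fun k => xs (θ₁ (θ₂ k)))
  set σ : ℕ → ℕ := fun k => θ₁ (θ₂ (θ₃ k)) with hσdef
  have hσ : StrictMono σ := hθ₁.comp (hθ₂.comp hθ₃)
  have hfβ : TendstoUniformly (fun k x => f (x + β (σ k))) g₂ atTop :=
    bb_tu_comp hg₂ (hθ₂.comp hθ₃)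
  have hg₂c : Continuous g₂ :=
    hg₂.continuous (Frequently.of_forall fun k => hfc.comp (continuous_add_right _))
  have hHσ : ∀ x, Tendsto (fun k => F (x + β (σ k))) atTop (𝓝 (H x)) :=
    fun x => (hH x).comp hθ₃.tendsto_atTop
  have hKσ : ∀ x, Tendsto (fun k => G (x + xs (σ k))) atTop (𝓝 (K x)) := hK
  have hfaσ : TendstoUniformly (fun k x => f (x + a (σ k))) gf atTop := bb_tu_comp hgfU₂ hσ
  have hGσ : ∀ x, Tendsto (fun k => F (x + a (σ k))) atTop (𝓝 (G x)) :=
    fun x => (hG₂ x).comp hσ.tendsto_atTop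
  have hgfx : TendstoUniformly (fun k y => gf (y + xs (σ k))) g₂ atTop := by
    rw [Metric.tendstoUniformly_iff]
    intro δ hδ
    have h1 := Metric.tendstoUniformly_iff.1 hfβ (δ/2) (by linarith)
    have h2 := Metric.tendstoUniformly_iff.1 hfaσ (δ/2) (by linarith)
    filter_upwards [h1, h2] with k h1k h2k
    intro y
    have e1 : y + β (σ k) = (y + xs (σ k)) + a (σ k) := by simp [hβdef]; ring
    calc dist (g₂ y) (gf (y + xs (σ k)))
        ≤ dist (g₂ y) (f (y + β (σ k))) + dist (f (y + β (σ k))) (gf (y + xs (σ k))) :=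
          dist_triangle _ _ _
      _ < δ/2 + δ/2 := by
          apply add_lt_add (h1k y)
          rw [e1, dist_comm]
          exact h2k (y + xs (σ k))
      _ = δ := by ring
  have htrans : ∀ (t x : ℝ), F (x + t) - F t = ∫ s in (0:ℝ)..x, f (s + t) := by
    intro t x
    rw [intervalIntegral.integral_comp_add_right f t, zero_add, ← hrep t (x + t)]
  have hGrep : ∀ x : ℝ, G x - G 0 = ∫ s in (0:ℝ)..x, gf s := by
    intro x
    have h1 : Tendsto (fun k => F (x + a (σ k)) - F (a (σ k))) atTop (𝓝 (G x - G 0)) := by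
      have := (hGσ x).sub (hGσ 0); simpa using this
    have h2 : Tendsto (fun k => F (x + a (σ k)) - F (a (σ k))) atTop
        (𝓝 (∫ s in (0:ℝ)..x, gf s)) := by
      have hit := bb_int_tendsto (fun k => hfc.comp (continuous_add_right (a (σ k)))) hgfc hfaσ x
      exact hit.congr fun k => (htrans (a (σ k)) x).symm
    exact tendsto_nhds_unique h1 h2
  have hHrep : ∀ x : ℝ, H x - H 0 = ∫ s in (0:ℝ)..x, g₂ s := by
    intro x
    have h1 : Tendsto (fun k => F (x + β (σ k)) - F (β (σ k))) atTop (𝓝 (H x - H 0)) := by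
      have := (hHσ x).sub (hHσ 0); simpa using this
    have h2 : Tendsto (fun k => F (x + β (σ k)) - F (β (σ k))) atTop
        (𝓝 (∫ s in (0:ℝ)..x, g₂ s)) := by
      have hit := bb_int_tendsto (fun k => hfc.comp (continuous_add_right (β (σ k)))) hg₂c hfβ x
      exact hit.congr fun k => (htrans (β (σ k)) x).symm
    exact tendsto_nhds_unique h1 h2
  have hGshift : ∀ (t x : ℝ), G (x + t) - G t = ∫ s in (0:ℝ)..x, gf (s + t) := by
    intro t x
    have e : G (x + t) - G t = (∫ s in (0:ℝ)..(x+t), gf s) - ∫ s in (0:ℝ)..t, gf s := by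
      rw [← hGrep (x+t), ← hGrep t]; ring
    rw [e, intervalIntegral.integral_interval_sub_left (hgfc.intervalIntegrable 0 (x+t))
        (hgfc.intervalIntegrable 0 t), intervalIntegral.integral_comp_add_right gf t, zero_add]
  have hKrep : ∀ y : ℝ, K y - K 0 = ∫ s in (0:ℝ)..y, g₂ s := by
    intro y
    have h1 : Tendsto (fun k => G (y + xs (σ k)) - G (xs (σ k))) atTop (𝓝 (K y - K 0)) := by
      have := (hKσ y).sub (hKσ 0); simpa using this
    have h2 : Tendsto (fun k => G (y + xs (σ k)) - G (xs (σ k))) atTop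
        (𝓝 (∫ s in (0:ℝ)..y, g₂ s)) := by
      have hit := bb_int_tendsto (fun k => hgfc.comp (continuous_add_right (xs (σ k)))) hg₂c hgfx y
      exact hit.congr fun k => (hGshift (xs (σ k)) y).symm
    exact tendsto_nhds_unique h1 h2
  set c0 : ℂ := H 0 - K 0 with hc0def
  have hc0 : ε ≤ ‖c0‖ := by
    have h1 : Tendsto (fun k => dist (G (xs (σ k))) (F (β (σ k)))) atTop
        (𝓝 (dist (K 0) (H 0))) := by
      have hk := hKσ 0
      have hh := hHσ 0
      simp only [zero_add] at hk hh
      exact hk.dist hh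
    have h2 : ∀ k, ε ≤ dist (G (xs (σ k))) (F (β (σ k))) := fun k => hxs (σ k)
    have := ge_of_tendsto h1 (Eventually.of_forall h2)
    rwa [dist_eq_norm, norm_sub_rev] at this
  have hHK : ∀ x, H x = K x + c0 := by
    intro x
    have h1 := hHrep x
    have h2 := hKrep x
    rw [hc0def]
    linear_combination h1 - h2
  have hKb : ∀ y, ‖K y‖ ≤ CF :=
    fun y => le_of_tendsto (hKσ y).norm (Eventually.of_forall fun k => hGb _)
  have hKlip : ∀ x y, ‖K x - K y‖ ≤ Mf * |x - y| := by
    intro x y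
    have h1 : Tendsto (fun k => ‖G (x + xs (σ k)) - G (y + xs (σ k))‖) atTop
        (𝓝 ‖K x - K y‖) := ((hKσ x).sub (hKσ y)).norm
    apply le_of_tendsto h1
    apply Eventually.of_forall
    intro k
    calc ‖G (x + xs (σ k)) - G (y + xs (σ k))‖ ≤ Mf * |x + xs (σ k) - (y + xs (σ k))| :=
        hGlip _ _
      _ = Mf * |x - y| := by ring_nf
  obtain ⟨ρ, hρ, P, hP⟩ := bb_extract hKb hKlip (fun k => -(β (σ k)))
  have hback : TendstoUniformly (fun k x => g₂ (x + -(β (σ (ρ k))))) f atTop := by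
    rw [Metric.tendstoUniformly_iff]
    intro δ hδ
    have h1 := Metric.tendstoUniformly_iff.1 (bb_tu_comp hfβ hρ) δ hδ
    filter_upwards [h1] with k hk
    intro x
    have h2 := hk (x + -(β (σ (ρ k))))
    have e : x + -(β (σ (ρ k))) + β (σ (ρ k)) = x := by ring
    rw [e] at h2
    rw [dist_comm]
    exact h2
  have hKshift : ∀ (t x : ℝ), K (x + t) - K t = ∫ s in (0:ℝ)..x, g₂ (s + t) := by
    intro t x
    have e : K (x + t) - K t = (∫ s in (0:ℝ)..(x+t), g₂ s) - ∫ s in (0:ℝ)..t, g₂ s := by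
      rw [← hKrep (x+t), ← hKrep t]; ring
    rw [e, intervalIntegral.integral_interval_sub_left (hg₂c.intervalIntegrable 0 (x+t))
        (hg₂c.intervalIntegrable 0 t), intervalIntegral.integral_comp_add_right g₂ t, zero_add]
  have hPrep : ∀ x : ℝ, P x - P 0 = ∫ s in (0:ℝ)..x, f s := by
    intro x
    have h1 : Tendsto (fun k => K (x + -(β (σ (ρ k)))) - K (-(β (σ (ρ k))))) atTop
        (𝓝 (P x - P 0)) := by
      have := (hP x).sub (hP 0); simpa using this
    have h2 : Tendsto (fun k => K (x + -(β (σ (ρ k)))) - K (-(β (σ (ρ k))))) atTop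
        (𝓝 (∫ s in (0:ℝ)..x, f s)) := by
      have hit := bb_int_tendsto (fun k => hg₂c.comp (continuous_add_right (-(β (σ (ρ k))))))
        hfc hback x
      exact hit.congr fun k => (hKshift (-(β (σ (ρ k)))) x).symm
    exact tendsto_nhds_unique h1 h2
  set c₁ : ℂ := P 0 - F 0 with hc₁def
  have hPF : ∀ x, P x = F x + c₁ := by
    intro x
    have h1 := hPrep x
    have h2 := hrep 0 x
    rw [hc₁def]
    linear_combination h1 - h2
  have claim : ∀ w : ℂ,
      (c₁ * (starRingEnd ℂ) w).re ≤ 0 ∧ ((c0 + c₁) * (starRingEnd ℂ) w).re ≤ 0 := by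
    intro w
    set ℓ : ℂ → ℝ := fun z => (z * (starRingEnd ℂ) w).re with hℓdef
    have hℓc : Continuous ℓ := Complex.continuous_re.comp (continuous_id.mul continuous_const)
    have hℓb : ∀ z : ℂ, ℓ z ≤ ‖z‖ * ‖w‖ := by
      intro z
      calc ℓ z ≤ |(z * (starRingEnd ℂ) w).re| := le_abs_self _
        _ ≤ ‖z * (starRingEnd ℂ) w‖ := Complex.abs_re_le_norm _
        _ = ‖z‖ * ‖w‖ := by rw [norm_mul, RCLike.norm_conj]
    have hbddF : BddAbove (Set.range fun x => ℓ (F x)) := by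
      refine ⟨CF * ‖w‖, ?_⟩
      rintro r ⟨x, rfl⟩
      exact le_trans (hℓb _) (mul_le_mul_of_nonneg_right (hFb x) (norm_nonneg w))
    have hbddG : BddAbove (Set.range fun x => ℓ (G x)) := by
      refine ⟨CF * ‖w‖, ?_⟩
      rintro r ⟨x, rfl⟩
      exact le_trans (hℓb _) (mul_le_mul_of_nonneg_right (hGb x) (norm_nonneg w))
    have hbddK : BddAbove (Set.range fun x => ℓ (K x)) := by
      refine ⟨CF * ‖w‖, ?_⟩
      rintro r ⟨x, rfl⟩
      exact le_trans (hℓb _) (mul_le_mul_of_nonneg_right (hKb x) (norm_nonneg w))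
    set sF : ℝ := ⨆ x : ℝ, ℓ (F x) with hsFdef
    set sG : ℝ := ⨆ x : ℝ, ℓ (G x) with hsGdef
    set sK : ℝ := ⨆ x : ℝ, ℓ (K x) with hsKdef
    have hGle : ∀ x, ℓ (G x) ≤ sF := by
      intro x
      have ht : Tendsto (fun k => ℓ (F (x + a (σ k)))) atTop (𝓝 (ℓ (G x))) :=
        (hℓc.tendsto _).comp (hGσ x)
      exact le_of_tendsto ht (Eventually.of_forall fun k => le_ciSup hbddF _)
    have hsGF : sG ≤ sF := ciSup_le hGle
    have hKle : ∀ y, ℓ (K y) ≤ sG := by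
      intro y
      have ht : Tendsto (fun k => ℓ (G (y + xs (σ k)))) atTop (𝓝 (ℓ (K y))) :=
        (hℓc.tendsto _).comp (hKσ y)
      exact le_of_tendsto ht (Eventually.of_forall fun k => le_ciSup hbddG _)
    have hsKF : sK ≤ sF := le_trans (ciSup_le hKle) hsGF
    have hHle : ∀ x, ℓ (H x) ≤ sF := by
      intro x
      have ht : Tendsto (fun k => ℓ (F (x + β (σ k)))) atTop (𝓝 (ℓ (H x))) :=
        (hℓc.tendsto _).comp (hHσ x)
      exact le_of_tendsto ht (Eventually.of_forall fun k => le_ciSup hbddF _)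
    have hPle : ∀ x, ℓ (P x) ≤ sK := by
      intro x
      have ht : Tendsto (fun k => ℓ (K (x + -(β (σ (ρ k)))))) atTop (𝓝 (ℓ (P x))) :=
        (hℓc.tendsto _).comp (hP x)
      exact le_of_tendsto ht (Eventually.of_forall fun k => le_ciSup hbddK _)
    have hadd : ∀ z z' : ℂ, ℓ (z + z') = ℓ z + ℓ z' := by
      intro z z'; simp [hℓdef, add_mul]; ring
    have hFK : sF ≤ sK - ℓ c₁ := by
      apply ciSup_le
      intro x
      have h1 := hPle x
      rw [hPF x, hadd] at h1
      linarith
    have hKH : sK ≤ sF - ℓ c0 := by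
      apply ciSup_le
      intro x
      have h1 := hHle x
      rw [hHK x, hadd] at h1
      linarith
    constructor
    · have : ℓ c₁ ≤ 0 := by linarith
      exact this
    · have : ℓ (c0 + c₁) ≤ 0 := by rw [hadd]; linarith
      exact this
  have hc₁0 : c₁ = 0 := by
    have h1 := (claim c₁).1
    rw [Complex.mul_conj] at h1
    simp only [Complex.ofReal_re] at h1
    exact Complex.normSq_eq_zero.1 (le_antisymm h1 (Complex.normSq_nonneg _))
  have hc00 : c0 = 0 := by
    have h2 := (claim c0).2
    rw [hc₁0, add_zero, Complex.mul_conj] at h2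
    simp only [Complex.ofReal_re] at h2
    exact Complex.normSq_eq_zero.1 (le_antisymm h2 (Complex.normSq_nonneg _))
  rw [hc00] at hc0
  simp only [norm_zero] at hc0
  linarith


lemma bb_prim_smooth {f : ℝ → ℂ} (hf : ContDiff ℝ (⊤:ℕ∞) f) (x₀ : ℝ) :
    ContDiff ℝ (⊤:ℕ∞) (fun x => ∫ t in x₀..x, f t) ∧ deriv (fun x => ∫ t in x₀..x, f t) = f := by
  have hfc := hf.continuous
  have hder : ∀ x : ℝ, HasDerivAt (fun y => ∫ t in x₀..y, f t) (f x) x := by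
    intro x
    exact intervalIntegral.integral_hasDerivAt_right (hfc.intervalIntegrable _ _)
      (hfc.stronglyMeasurableAtFilter _ _) hfc.continuousAt
  have hd : deriv (fun y => ∫ t in x₀..y, f t) = f := funext fun x => (hder x).deriv
  exact ⟨contDiff_infty_iff_deriv.2 ⟨fun x => (hder x).differentiableAt, by rw [hd]; exact hf⟩, hd⟩


/-- generalized Bohl–Bohr theorem: the primitive of an almost periodic
generalized function is almost periodic iff it is a bounded generalized function. -/
theorem generalized_bohl_bohr (u : ℝ → ℝ → ℂ)
    (hu_ap : ∀ ε ∈ Set.Ioc (0:ℝ) 1, BAp (u ε)) (hu : Moderate u) (x₀ : ℝ) :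
    ((∀ ε ∈ Set.Ioc (0:ℝ) 1, BAp (fun x => ∫ t in x₀..x, u ε t)) ∧
        Moderate (fun ε x => ∫ t in x₀..x, u ε t)) ↔
      ((∀ ε ∈ Set.Ioc (0:ℝ) 1, ∃ C : ℝ, ∀ x : ℝ, ‖∫ t in x₀..x, u ε t‖ ≤ C) ∧
        ∃ m : ℕ, ∃ C > (0:ℝ), ∃ ε₀ ∈ Set.Ioc (0:ℝ) 1, ∀ ε ∈ Set.Ioc (0:ℝ) 1, ε ≤ ε₀ →
          ∀ x : ℝ, ‖∫ t in x₀..x, u ε t‖ ≤ C / ε ^ m) := by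
  constructor
  · rintro ⟨hBAp, hMod⟩
    have hbd : ∀ ε ∈ Set.Ioc (0:ℝ) 1, ∃ C : ℝ, 0 ≤ C ∧ ∀ x : ℝ, ‖∫ t in x₀..x, u ε t‖ ≤ C := by
      intro ε hε
      have hap0 : AlmostPeriodic (fun x => ∫ t in x₀..x, u ε t) := by
        have h0 := (hBAp ε hε).2 0
        rwa [iteratedDeriv_zero] at h0
      obtain ⟨M, hM0, hM⟩ := bb_ap_bounded hap0
      exact ⟨M, hM0, hM⟩
    constructor
    · intro ε hε
      obtain ⟨M, _, hM⟩ := hbd ε hε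
      exact ⟨M, hM⟩
    · obtain ⟨m, C, hC, ε₀, hε₀, hbound⟩ := hMod 0
      refine ⟨m, C, hC, ε₀, hε₀, fun ε hε hεle x => ?_⟩
      obtain ⟨M, _, hM⟩ := hbd ε hε
      have hbdd : BddAbove (Set.range fun y : ℝ => ‖∫ t in x₀..y, u ε t‖) := by
        refine ⟨M, ?_⟩
        rintro r ⟨y, rfl⟩
        exact hM y
      have h1 : ‖∫ t in x₀..x, u ε t‖ ≤ ⨆ y : ℝ, ‖∫ t in x₀..y, u ε t‖ := le_ciSup hbdd x
      have h2 : apSeminorm 0 (fun y => ∫ t in x₀..y, u ε t) =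
          ⨆ y : ℝ, ‖∫ t in x₀..y, u ε t‖ := by
        simp only [apSeminorm, zero_add, Finset.sum_range_one, iteratedDeriv_zero]
      have h3 := hbound ε hε hεle
      rw [h2] at h3
      exact le_trans h1 h3
  · rintro ⟨hBd, m, C, hC, ε₀, hε₀, hbound⟩
    have hsm : ∀ ε ∈ Set.Ioc (0:ℝ) 1, ContDiff ℝ (⊤:ℕ∞) (fun x => ∫ t in x₀..x, u ε t) ∧
        deriv (fun x => ∫ t in x₀..x, u ε t) = u ε :=
      fun ε hε => bb_prim_smooth (hu_ap ε hε).1 x₀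
    have hrep : ∀ ε ∈ Set.Ioc (0:ℝ) 1, ∀ a b : ℝ,
        (∫ t in x₀..b, u ε t) - (∫ t in x₀..a, u ε t) = ∫ t in a..b, u ε t := by
      intro ε hε a b
      have hc := (hu_ap ε hε).1.continuous
      exact intervalIntegral.integral_interval_sub_left (hc.intervalIntegrable x₀ b)
        (hc.intervalIntegrable x₀ a)
    constructor
    · intro ε hε
      obtain ⟨hsmooth, hder⟩ := hsm ε hε
      refine ⟨hsmooth, fun j => ?_⟩
      cases j with
      | zero =>
        rw [iteratedDeriv_zero]
        obtain ⟨CB, hCB⟩ := hBd ε hε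
        have hap := (hu_ap ε hε).2 0
        rw [iteratedDeriv_zero] at hap
        exact bb_main hap (hrep ε hε) hCB
      | succ j =>
        rw [iteratedDeriv_succ', hder]
        exact (hu_ap ε hε).2 j
    · intro k
      obtain ⟨m', C', hC', ε₀', hε₀', hb'⟩ := hu k
      refine ⟨max m m', C + C', by positivity, min ε₀ ε₀',
        ⟨lt_min hε₀.1 hε₀'.1, le_trans (min_le_left _ _) hε₀.2⟩, ?_⟩
      intro ε hε hεle
      have hεle1 : ε ≤ ε₀ := le_trans hεle (min_le_left _ _)
      have hεle2 : ε ≤ ε₀' := le_trans hεle (min_le_right _ _)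
      have hεpos : (0:ℝ) < ε := hε.1
      have hsup : (⨆ x : ℝ, ‖∫ t in x₀..x, u ε t‖) ≤ C / ε ^ m :=
        Real.iSup_le (fun x => hbound ε hε hεle1 x) (by positivity)
      have he : ∀ j : ℕ, iteratedDeriv (j+1) (fun x => ∫ t in x₀..x, u ε t) =
          iteratedDeriv j (u ε) := by
        intro j
        rw [iteratedDeriv_succ', (hsm ε hε).2]
      have hrest : (∑ j ∈ Finset.range k,
          ⨆ x : ℝ, ‖iteratedDeriv (j+1) (fun y => ∫ t in x₀..y, u ε t) x‖) ≤ C' / ε ^ m' := by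
        calc (∑ j ∈ Finset.range k,
            ⨆ x : ℝ, ‖iteratedDeriv (j+1) (fun y => ∫ t in x₀..y, u ε t) x‖)
            = ∑ j ∈ Finset.range k, ⨆ x : ℝ, ‖iteratedDeriv j (u ε) x‖ := by
              refine Finset.sum_congr rfl fun j _ => ?_
              rw [he j]
          _ ≤ ∑ j ∈ Finset.range (k+1), ⨆ x : ℝ, ‖iteratedDeriv j (u ε) x‖ := by
              refine Finset.sum_le_sum_of_subset_of_nonneg
                (Finset.range_subset_range.2 (Nat.le_succ k)) fun j _ _ => ?_
              exact Real.iSup_nonneg fun x => norm_nonneg _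
          _ = apSeminorm k (u ε) := rfl
          _ ≤ C' / ε ^ m' := hb' ε hε hεle2
      have hsplit : apSeminorm k (fun y => ∫ t in x₀..y, u ε t) =
          (⨆ x : ℝ, ‖∫ t in x₀..x, u ε t‖) + ∑ j ∈ Finset.range k,
            ⨆ x : ℝ, ‖iteratedDeriv (j+1) (fun y => ∫ t in x₀..y, u ε t) x‖ := by
        simp only [apSeminorm]
        rw [Finset.sum_range_succ', iteratedDeriv_zero]
        ring
      have hpow1 : ε ^ (max m m') ≤ ε ^ m :=
        pow_le_pow_of_le_one hεpos.le hε.2 (le_max_left _ _)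
      have hpow2 : ε ^ (max m m') ≤ ε ^ m' :=
        pow_le_pow_of_le_one hεpos.le hε.2 (le_max_right _ _)
      have hMpos : (0:ℝ) < ε ^ (max m m') := pow_pos hεpos _
      have hd1 : C / ε ^ m ≤ C / ε ^ (max m m') :=
        div_le_div_of_nonneg_left hC.le hMpos hpow1
      have hd2 : C' / ε ^ m' ≤ C' / ε ^ (max m m') :=
        div_le_div_of_nonneg_left hC'.le hMpos hpow2
      have : apSeminorm k (fun y => ∫ t in x₀..y, u ε t) ≤
          C / ε ^ (max m m') + C' / ε ^ (max m m') := by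
        rw [hsplit]
        linarith
      rwa [← add_div] at this
end
end
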